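/- Let M be an irreducible n×n matrix with nonnegative integer entries, n ≥ 2, such that some column of M has sum at least 2 (i.e., M is not a permutation matrix). Then the Perron–Frobenius eigenvalue λ of M satisfies λ^n ≥ 2, in particular λ > 1. -/

import Mathlib

open Matrix

/-- The spectral radius of a real square matrix: the supremum of the absolute
values of its complex eigenvalues. -/
noncomputable def specRad {m : Type*} [Fintype m] [DecidableEq m] (M : Matrix m m ℝ) : ℝ :=
  sSup ((fun z : ℂ => ‖z‖) '' spectrum ℂ (M.map Complex.ofReal))

/-- A nonnegative square matrix is irreducible if for every pair of indices `(i,j)`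
some power of the matrix has positive `(i,j)` entry. -/
def MatIrreducible {m : Type*} [Fintype m] [DecidableEq m] (M : Matrix m m ℕ) : Prop :=
  ∀ i j, ∃ N : ℕ, 0 < N ∧ 0 < (M ^ N) i j

open Finset Filter

attribute [local instance] Matrix.linftyOpNormedRing Matrix.linftyOpNormedAlgebra

namespace PFAux

variable {n : ℕ} (M : Matrix (Fin n) (Fin n) ℕ)

lemma pow_entry_mul_le (a b : ℕ) (u w v : Fin n) :
    (M ^ a) u w * (M ^ b) w v ≤ (M ^ (a + b)) u v := by
  rw [pow_add, Matrix.mul_apply]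
  exact Finset.single_le_sum (f := fun w => (M ^ a) u w * (M ^ b) w v)
    (fun _ _ => Nat.zero_le _) (Finset.mem_univ w)

lemma B_diag_pos (v : Fin n) : 1 ≤ (1 + M) v v := by
  simp [Matrix.add_apply, Matrix.one_apply]

lemma B_pow_mono (u v : Fin n) :
    Monotone fun t => ((1 + M) ^ t : Matrix (Fin n) (Fin n) ℕ) u v := by
  apply monotone_nat_of_le_succ
  intro t
  have h1 : ((1 + M) ^ t) u v * (1 + M) v v ≤ ((1 + M) ^ (t + 1)) u v := by
    have := pow_entry_mul_le (1 + M) t 1 u v v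
    rwa [show (1 + M) ^ 1 = 1 + M from pow_one _] at this
  calc ((1 + M) ^ t) u v ≤ ((1 + M) ^ t) u v * (1 + M) v v :=
        Nat.le_mul_of_pos_right _ (B_diag_pos M v)
    _ ≤ _ := h1

lemma M_pow_le_B_pow (N : ℕ) (u v : Fin n) : (M ^ N) u v ≤ ((1 + M) ^ N) u v := by
  induction N generalizing v with
  | zero => simp
  | succ N ih =>
    rw [pow_succ, pow_succ, Matrix.mul_apply, Matrix.mul_apply]
    apply Finset.sum_le_sum
    intro w _
    exact Nat.mul_le_mul (ih w) (by simp [Matrix.add_apply])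

lemma B_pow_to_M (ℓ : ℕ) (u v : Fin n) (h : 0 < ((1 + M) ^ ℓ) u v) :
    ∃ m ≤ ℓ, 0 < (M ^ m) u v := by
  induction ℓ generalizing v with
  | zero =>
    simp only [pow_zero] at h
    exact ⟨0, le_refl 0, by simpa using h⟩
  | succ ℓ ih =>
    rw [pow_succ, Matrix.mul_apply] at h
    obtain ⟨w, -, hw⟩ := Finset.exists_ne_zero_of_sum_ne_zero h.ne'
    have h1 : 0 < ((1 + M) ^ ℓ) u w := Nat.pos_of_ne_zero (fun he => hw (by simp [he]))
    have h2 : 0 < (1 + M) w v := Nat.pos_of_ne_zero (fun he => hw (by simp [he]))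
    obtain ⟨m, hm, hpos⟩ := ih w h1
    by_cases hwv : w = v
    · exact ⟨m, hm.trans (Nat.le_succ ℓ), hwv ▸ hpos⟩
    · have h3 : 0 < M w v := by
        have : (1 + M) w v = M w v := by simp [Matrix.add_apply, Matrix.one_apply_ne hwv]
        rwa [this] at h2
      refine ⟨m + 1, by omega, ?_⟩
      have := pow_entry_mul_le M m 1 u w v
      rw [pow_one] at this
      exact Nat.lt_of_lt_of_le (Nat.mul_pos hpos h3) this

/-- reachable set in ≤ t steps -/
noncomputable def reachSet (u : Fin n) (t : ℕ) : Finset (Fin n) :=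
  Finset.univ.filter (fun w => 0 < ((1 + M) ^ t) u w)

lemma reachSet_mono (u : Fin n) : Monotone (reachSet M u) := by
  intro s t hst w hw
  simp only [reachSet, Finset.mem_filter, Finset.mem_univ, true_and] at *
  exact lt_of_lt_of_le hw (B_pow_mono M u w hst)

lemma mem_reachSet_succ (u w : Fin n) (t : ℕ) :
    w ∈ reachSet M u (t + 1) ↔ ∃ x ∈ reachSet M u t, 0 < (1 + M) x w := by
  simp only [reachSet, Finset.mem_filter, Finset.mem_univ, true_and]
  constructor
  · intro h
    rw [pow_succ, Matrix.mul_apply] at h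
    obtain ⟨x, -, hx⟩ := Finset.exists_ne_zero_of_sum_ne_zero h.ne'
    exact ⟨x, Nat.pos_of_ne_zero (fun he => hx (by simp [he])),
      Nat.pos_of_ne_zero (fun he => hx (by simp [he]))⟩
  · rintro ⟨x, hx1, hx2⟩
    have := pow_entry_mul_le (1 + M) t 1 u x w
    rw [pow_one] at this
    exact Nat.lt_of_lt_of_le (Nat.mul_pos hx1 hx2) this

lemma reachSet_stab (u : Fin n) (t : ℕ) (h : reachSet M u (t + 1) = reachSet M u t) :
    ∀ s, reachSet M u (t + s) = reachSet M u t := by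
  intro s
  induction s with
  | zero => rfl
  | succ s ih =>
    apply le_antisymm
    · intro w hw
      rw [show t + (s + 1) = (t + s) + 1 from rfl, mem_reachSet_succ] at hw
      obtain ⟨x, hx1, hx2⟩ := hw
      rw [ih] at hx1
      rw [← h, mem_reachSet_succ]
      exact ⟨x, hx1, hx2⟩
    · exact reachSet_mono M u (Nat.le_add_right t (s + 1))

lemma exists_stab (u : Fin n) : ∃ t < n, reachSet M u (t + 1) = reachSet M u t := by
  by_contra hcon
  push_neg at hcon
  have hstrict : ∀ t < n, (reachSet M u t).card < (reachSet M u (t + 1)).card := by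
    intro t ht
    have hsub := reachSet_mono M u (Nat.le_succ t)
    exact Finset.card_lt_card (lt_of_le_of_ne hsub (fun he => hcon t ht he.symm))
  have hcard : ∀ t ≤ n, t + 1 ≤ (reachSet M u t).card := by
    intro t
    induction t with
    | zero =>
      intro _
      have hu : u ∈ reachSet M u 0 := by simp [reachSet, Matrix.one_apply]
      exact Finset.card_pos.mpr ⟨u, hu⟩
    | succ t ih =>
      intro ht
      have h1 := hstrict t (by omega)
      have h2 := ih (by omega)
      omega
  have h1 := hcard n le_rfl
  have h2 : (reachSet M u n).card ≤ n := by
    simpa using Finset.card_le_card (Finset.subset_univ (reachSet M u n))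
  omega

lemma shorten (u v : Fin n) (N : ℕ) (h : 0 < (M ^ N) u v) :
    ∃ ℓ < n, 0 < (M ^ ℓ) u v := by
  have hv : v ∈ reachSet M u N := by
    simp only [reachSet, Finset.mem_filter, Finset.mem_univ, true_and]
    exact lt_of_lt_of_le h (M_pow_le_B_pow M N u v)
  obtain ⟨t, htn, hstabeq⟩ := exists_stab M u
  have hv' : v ∈ reachSet M u t := by
    rcases le_total N t with hNt | htN
    · exact reachSet_mono M u hNt hv
    · have := reachSet_stab M u t hstabeq (N - t)
      rw [show t + (N - t) = N by omega] at this
      rwa [this] at hv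
  simp only [reachSet, Finset.mem_filter, Finset.mem_univ, true_and] at hv'
  obtain ⟨m, hm, hp⟩ := B_pow_to_M M t u v hv'
  exact ⟨m, by omega, hp⟩

lemma colsum_pos (hirr : MatIrreducible M) : ∀ (k : ℕ) (v : Fin n), 1 ≤ ∑ a, (M ^ k) a v := by
  intro k
  induction k with
  | zero => intro v; simp [Matrix.one_apply]
  | succ k ih =>
    intro v
    obtain ⟨N, hN, hpos⟩ := hirr v v
    obtain ⟨N', rfl⟩ : ∃ N', N = N' + 1 := ⟨N - 1, by omega⟩
    rw [pow_succ, Matrix.mul_apply] at hpos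
    obtain ⟨w, -, hw⟩ := Finset.exists_ne_zero_of_sum_ne_zero hpos.ne'
    have hMwv : 0 < M w v := Nat.pos_of_ne_zero (fun he => hw (by simp [he]))
    have hiw : 1 ≤ ∑ a, (M ^ k) a w := ih w
    calc (1:ℕ) ≤ (∑ a, (M ^ k) a w) * M w v :=
          Nat.one_le_iff_ne_zero.mpr (Nat.mul_ne_zero (by omega) hMwv.ne')
      _ = ∑ a, (M ^ k) a w * M w v := by rw [Finset.sum_mul]
      _ ≤ ∑ a, (M ^ (k+1)) a v :=
          Finset.sum_le_sum fun a _ => by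
            have := pow_entry_mul_le M k 1 a w v
            rwa [pow_one] at this

lemma growth (hirr : MatIrreducible M) (j : Fin n) (hcol : 2 ≤ ∑ i, M i j) :
    ∀ k, 2 ^ (k / n) ≤ ∑ a, (M ^ k) a j := by
  intro k
  induction k using Nat.strong_induction_on with
  | _ k ih =>
    rcases lt_or_ge k n with hk | hk
    · rw [Nat.div_eq_of_lt hk, pow_zero]
      exact colsum_pos M hirr k j
    · have hn0 : 0 < n := Fin.pos j
      obtain ⟨k', rfl⟩ : ∃ k', k = k' + 1 := ⟨k - 1, by omega⟩
      have key : ∀ i, 0 < M i j → 2 ^ ((k' + 1) / n - 1) ≤ ∑ a, (M ^ k') a i := by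
        intro i hij
        obtain ⟨N, -, hN⟩ := hirr j i
        obtain ⟨ℓ, hℓn, hℓ⟩ := shorten M j i N hN
        have hℓk : ℓ ≤ k' := by omega
        have step1 : ∑ a, (M ^ (k' - ℓ)) a j ≤ ∑ a, (M ^ k') a i := by
          calc ∑ a, (M ^ (k' - ℓ)) a j ≤ ∑ a, (M ^ (k' - ℓ)) a j * (M ^ ℓ) j i :=
                Finset.sum_le_sum fun a _ => Nat.le_mul_of_pos_right _ hℓ
            _ ≤ ∑ a, (M ^ k') a i :=
                Finset.sum_le_sum fun a _ => by
                  have := pow_entry_mul_le M (k' - ℓ) ℓ a j i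
                  rwa [Nat.sub_add_cancel hℓk] at this
        have hih := ih (k' - ℓ) (by omega)
        have hexp : (k' + 1) / n - 1 ≤ (k' - ℓ) / n := by
          rw [Nat.div_eq_sub_div hn0 hk, Nat.add_sub_cancel]
          exact Nat.div_le_div_right (by omega)
        calc 2 ^ ((k' + 1) / n - 1) ≤ 2 ^ ((k' - ℓ) / n) := Nat.pow_le_pow_right (by norm_num) hexp
          _ ≤ ∑ a, (M ^ (k' - ℓ)) a j := hih
          _ ≤ ∑ a, (M ^ k') a i := step1
      have expand : ∑ a, (M ^ (k' + 1)) a j = ∑ i, (∑ a, (M ^ k') a i) * M i j := by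
        simp_rw [pow_succ, Matrix.mul_apply, Finset.sum_mul]
        rw [Finset.sum_comm]
      have hdivpos : 1 ≤ (k' + 1) / n := (Nat.one_le_div_iff hn0).mpr hk
      calc 2 ^ ((k' + 1) / n) = 2 ^ ((k' + 1) / n - 1) * 2 := by
            rw [← pow_succ]; congr 1; omega
        _ ≤ 2 ^ ((k' + 1) / n - 1) * ∑ i, M i j := Nat.mul_le_mul_left _ hcol
        _ = ∑ i, 2 ^ ((k' + 1) / n - 1) * M i j := by rw [Finset.mul_sum]
        _ ≤ ∑ i, (∑ a, (M ^ k') a i) * M i j := by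
            apply Finset.sum_le_sum
            intro i _
            rcases Nat.eq_zero_or_pos (M i j) with h0 | hpos
            · simp [h0]
            · exact Nat.mul_le_mul_right _ (key i hpos)
        _ = ∑ a, (M ^ (k' + 1)) a j := expand.symm

/-! ### Analytic part -/

noncomputable def A (M : Matrix (Fin n) (Fin n) ℕ) : Matrix (Fin n) (Fin n) ℂ :=
  M.map (Nat.cast : ℕ → ℂ)

lemma A_pow (M : Matrix (Fin n) (Fin n) ℕ) (k : ℕ) :
    (A M) ^ k = (M ^ k).map (Nat.cast : ℕ → ℂ) := by
  have : A M = (Nat.castRingHom ℂ).mapMatrix M := rfl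
  rw [this, ← map_pow]
  rfl

lemma entry_le_nnnorm (M : Matrix (Fin n) (Fin n) ℕ) (k : ℕ) (a j : Fin n) :
    ((M ^ k) a j : NNReal) ≤ ‖(A M) ^ k‖₊ := by
  rw [A_pow, Matrix.linfty_opNNNorm_def]
  calc ((M ^ k) a j : NNReal) = ‖((M ^ k).map (Nat.cast : ℕ → ℂ)) a j‖₊ := by
        simp [Matrix.map_apply]
    _ ≤ ∑ b, ‖((M ^ k).map (Nat.cast : ℕ → ℂ)) a b‖₊ :=
        Finset.single_le_sum (f := fun b => ‖((M ^ k).map (Nat.cast : ℕ → ℂ)) a b‖₊)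
          (fun _ _ => zero_le) (Finset.mem_univ j)
    _ ≤ _ := Finset.le_sup (f := fun i => ∑ b, ‖((M ^ k).map (Nat.cast : ℕ → ℂ)) i b‖₊)
          (Finset.mem_univ a)

lemma nnnorm_lb (M : Matrix (Fin n) (Fin n) ℕ) (j : Fin n) (hn : 0 < n)
    (hg : ∀ k, 2 ^ (k / n) ≤ ∑ a, (M ^ k) a j) (m : ℕ) (hm : n ≤ m) :
    (2 : NNReal) ^ (m - n) ≤ ‖(A M) ^ (n * m)‖₊ := by
  have h1 : (2 : ℕ) ^ m ≤ ∑ a, (M ^ (n * m)) a j := by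
    have := hg (n * m)
    rwa [Nat.mul_div_cancel_left m hn] at this
  have h2 : ((2 : NNReal)) ^ m ≤ (n : NNReal) * ‖(A M) ^ (n * m)‖₊ := by
    calc ((2 : NNReal)) ^ m = ((2 ^ m : ℕ) : NNReal) := by push_cast; ring
      _ ≤ ((∑ a, (M ^ (n * m)) a j : ℕ) : NNReal) := by exact_mod_cast h1
      _ = ∑ a, (((M ^ (n * m)) a j : ℕ) : NNReal) := by push_cast; rfl
      _ ≤ ∑ _a : Fin n, ‖(A M) ^ (n * m)‖₊ :=
          Finset.sum_le_sum fun a _ => entry_le_nnnorm M (n * m) a j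
      _ = (n : NNReal) * ‖(A M) ^ (n * m)‖₊ := by
          rw [Finset.sum_const, Finset.card_univ, Fintype.card_fin, nsmul_eq_mul]
  have h3 : (2 : NNReal) ^ (m - n) * (2 : NNReal) ^ n ≤ ‖(A M) ^ (n * m)‖₊ * (2 : NNReal) ^ n := by
    rw [← pow_add, Nat.sub_add_cancel hm]
    calc (2:NNReal) ^ m ≤ (n : NNReal) * ‖(A M) ^ (n * m)‖₊ := h2
      _ ≤ (2:NNReal) ^ n * ‖(A M) ^ (n * m)‖₊ := by
          apply mul_le_mul_left
          exact_mod_cast Nat.le_of_lt (Nat.lt_two_pow_self (n := n))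
      _ = ‖(A M) ^ (n * m)‖₊ * (2:NNReal) ^ n := mul_comm _ _
  exact le_of_mul_le_mul_right h3 (by positivity)

lemma exp_tendsto (hn : 0 < n) :
    Tendsto (fun m : ℕ => (((m - n : ℕ) : ℝ)) / (((n * m : ℕ)) : ℝ)) atTop
      (nhds ((n : ℝ)⁻¹)) := by
  have h1 : Tendsto (fun m : ℕ => (n : ℝ)⁻¹ - (m : ℝ)⁻¹) atTop (nhds ((n : ℝ)⁻¹)) := by
    have := tendsto_inv_atTop_nhds_zero_nat (𝕜 := ℝ)
    have h := (tendsto_const_nhds (x := (n:ℝ)⁻¹) (f := atTop)).sub this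
    simpa using h
  apply h1.congr'
  filter_upwards [eventually_ge_atTop (max n 1)] with m hm
  have hmn : n ≤ m := le_trans (le_max_left _ _) hm
  have hm1 : 1 ≤ m := le_trans (le_max_right _ _) hm
  have hne : (m : ℝ) ≠ 0 := by positivity
  have hnne : (n : ℝ) ≠ 0 := by positivity
  rw [Nat.cast_sub hmn, Nat.cast_mul]
  field_simp

lemma bseq_tendsto (hn : 0 < n) :
    Tendsto (fun m : ℕ => ENNReal.ofReal ((2 : ℝ) ^ ((((m - n : ℕ) : ℝ)) / (((n * m : ℕ)) : ℝ))))
      atTop (nhds (ENNReal.ofReal ((2 : ℝ) ^ ((n : ℝ)⁻¹)))) := by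
  have hc : ContinuousAt (fun x : ℝ => ENNReal.ofReal ((2 : ℝ) ^ x)) ((n : ℝ)⁻¹) :=
    ENNReal.continuous_ofReal.continuousAt.comp (Real.continuousAt_const_rpow two_ne_zero)
  exact hc.tendsto.comp (exp_tendsto hn)

lemma specRadius_lb (M : Matrix (Fin n) (Fin n) ℕ) (j : Fin n) (hn : 2 ≤ n)
    (hg : ∀ k, 2 ^ (k / n) ≤ ∑ a, (M ^ k) a j) :
    ENNReal.ofReal ((2 : ℝ) ^ ((n : ℝ)⁻¹)) ≤ spectralRadius ℂ (A M) := by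
  have hn0 : 0 < n := by omega
  haveI : NeZero n := ⟨hn0.ne'⟩
  have hGel := spectrum.pow_nnnorm_pow_one_div_tendsto_nhds_spectralRadius (A M)
  have htn : Tendsto (fun m : ℕ => n * m) atTop atTop :=
    tendsto_atTop_mono (fun m => Nat.le_mul_of_pos_left m hn0) tendsto_id
  have htu : Tendsto (fun m : ℕ => (‖(A M) ^ (n * m)‖₊ : ENNReal) ^ (1 / ((n * m : ℕ)) : ℝ))
      atTop (nhds (spectralRadius ℂ (A M))) := hGel.comp htn
  refine le_of_tendsto_of_tendsto (bseq_tendsto hn0) htu ?_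
  filter_upwards [eventually_ge_atTop (max n 1)] with m hm
  have hmn : n ≤ m := le_trans (le_max_left _ _) hm
  have hm1 : 1 ≤ m := le_trans (le_max_right _ _) hm
  have hnm : (0:ℝ) < ((n * m : ℕ) : ℝ) := by positivity
  have hb := nnnorm_lb M j hn0 hg m hmn
  have step1 : (((2 : NNReal) ^ (m - n) : NNReal) : ENNReal) ^ (1 / ((n * m : ℕ)) : ℝ)
      ≤ (‖(A M) ^ (n * m)‖₊ : ENNReal) ^ (1 / ((n * m : ℕ)) : ℝ) := by
    apply ENNReal.rpow_le_rpow _ (by positivity)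
    exact_mod_cast hb
  refine le_trans (le_of_eq ?_) step1
  have h2 : (((2 : NNReal) ^ (m - n) : NNReal) : ENNReal) = ENNReal.ofReal ((2:ℝ) ^ (m - n)) := by
    rw [ENNReal.ofReal_pow (by norm_num)]
    norm_num
  rw [h2, ENNReal.ofReal_rpow_of_pos (by positivity)]
  congr 1
  rw [← Real.rpow_natCast (2:ℝ) (m - n), ← Real.rpow_mul (by norm_num)]
  congr 1
  field_simp

lemma sSup_abs_lb (M : Matrix (Fin n) (Fin n) ℕ) (j : Fin n) (hn : 2 ≤ n)
    (hg : ∀ k, 2 ^ (k / n) ≤ ∑ a, (M ^ k) a j) :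
    (2 : ℝ) ^ ((n : ℝ)⁻¹) ≤ sSup ((fun z : ℂ => ‖z‖) '' spectrum ℂ (A M)) := by
  have hn0 : 0 < n := by omega
  haveI : NeZero n := ⟨hn0.ne'⟩
  have hne : (spectrum ℂ (A M)).Nonempty := spectrum.nonempty (A M)
  have hcpt : IsCompact (spectrum ℂ (A M)) := spectrum.isCompact (A M)
  obtain ⟨z, hz, hmax'⟩ := hcpt.exists_isMaxOn hne continuous_norm.continuousOn
  have hmax : ∀ w ∈ spectrum ℂ (A M), ‖w‖ ≤ ‖z‖ := fun w hw => hmax' hw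
  have hsup : sSup ((fun z : ℂ => ‖z‖) '' spectrum ℂ (A M)) = ‖z‖ :=
    IsGreatest.csSup_eq ⟨⟨z, hz, rfl⟩, by rintro y ⟨w, hw, rfl⟩; exact hmax w hw⟩
  have hrad : spectralRadius ℂ (A M) = (‖z‖₊ : ENNReal) := by
    apply le_antisymm
    · refine iSup₂_le fun w hw => ?_
      exact_mod_cast ENNReal.coe_le_coe.mpr (by exact_mod_cast hmax w hw)
    · exact le_iSup₂ (f := fun k (_ : k ∈ spectrum ℂ (A M)) => (‖k‖₊ : ENNReal)) z hz
  have hlb := specRadius_lb M j hn hg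
  rw [hrad] at hlb
  rw [hsup]
  have := (ENNReal.ofReal_le_iff_le_toReal ENNReal.coe_ne_top).mp hlb
  simpa using this

end PFAux

/-- An irreducible nonnegative integer matrix of size `n ≥ 2` with some column sum at
least `2` has Perron–Frobenius eigenvalue `λ` with `λ^n ≥ 2`; in particular `λ > 1`. -/
theorem perron_frobenius_eigenvalue_gt_one
    {n : ℕ} (hn : 2 ≤ n) (M : Matrix (Fin n) (Fin n) ℕ)
    (hirr : MatIrreducible M)
    (hcol : ∃ j, 2 ≤ ∑ i, M i j) :
    2 ≤ specRad (M.map (Nat.cast : ℕ → ℝ)) ^ n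
    ∧ 1 < specRad (M.map (Nat.cast : ℕ → ℝ)) := by
  obtain ⟨j, hj⟩ := hcol
  have hg : ∀ k, 2 ^ (k / n) ≤ ∑ a, (M ^ k) a j := PFAux.growth M hirr j hj
  have hAeq : (M.map (Nat.cast : ℕ → ℝ)).map Complex.ofReal = PFAux.A M := by
    ext i k
    simp [Matrix.map_apply, PFAux.A]
  have key : (2 : ℝ) ^ ((n : ℝ)⁻¹) ≤ specRad (M.map (Nat.cast : ℕ → ℝ)) := by
    unfold specRad
    rw [hAeq]
    exact PFAux.sSup_abs_lb M j hn hg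
  have h2pos : (0:ℝ) < (2 : ℝ) ^ ((n : ℝ)⁻¹) := by positivity
  constructor
  · calc (2:ℝ) = ((2 : ℝ) ^ ((n : ℝ)⁻¹)) ^ n := by
          rw [← Real.rpow_natCast ((2:ℝ) ^ ((n : ℝ)⁻¹)) n, ← Real.rpow_mul (by norm_num),
            inv_mul_cancel₀ (by positivity), Real.rpow_one]
      _ ≤ specRad (M.map (Nat.cast : ℕ → ℝ)) ^ n := pow_le_pow_left₀ h2pos.le key n
  · calc (1:ℝ) < (2 : ℝ) ^ ((n : ℝ)⁻¹) :=
          (Real.one_lt_rpow_iff_of_pos (by norm_num)).mpr (Or.inl ⟨one_lt_two, by positivity⟩)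
      _ ≤ _ := key
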